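/- Every entry of the vector σ* Ψ^{-1} σ* 1 is positive, and the maximum of the smallest eigenvalue of W(b) over all unit vectors b in ℝ^n exists and equals (1ᵀ σ* Ψ^{-1} σ* 1)^{-1}. Equivalently, the worst-case minimal control energy φ = min_{‖b‖=1} max_{‖x‖=1} xᵀ W(b)^{-1} x equals 1ᵀ σ* Ψ^{-1} σ* 1. -/

import Mathlib

set_option maxHeartbeats 1000000

open Matrix BigOperators Finset MeasureTheory

/-- The Cauchy matrix with entries `1/(λᵢ + λⱼ)`. -/
noncomputable def cauchyPsi (n : ℕ) (lam : Fin n → ℝ) : Matrix (Fin n) (Fin n) ℝ :=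
  Matrix.of fun i j => 1 / (lam i + lam j)

/-- `W(b) = diag(b) Ψ diag(b)`. -/
noncomputable def cauchyW (n : ℕ) (lam : Fin n → ℝ) (b : Fin n → ℝ) :
    Matrix (Fin n) (Fin n) ℝ :=
  Matrix.diagonal b * cauchyPsi n lam * Matrix.diagonal b

/-- The diagonal signature matrix `σ*` with `i`-th diagonal entry `(-1)^i`. -/
noncomputable def sigmaStar (n : ℕ) : Matrix (Fin n) (Fin n) ℝ :=
  Matrix.diagonal fun i : Fin n => (-1 : ℝ) ^ (i : ℕ)

/-- Every entry of `σ* Ψ⁻¹ σ* 1` is positive, and the maximum over unit vectors `b`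
of the smallest eigenvalue of `W(b)` exists and equals `(1ᵀ σ* Ψ⁻¹ σ* 1)⁻¹`;
equivalently, the worst-case minimal control energy
`φ = min_{‖b‖=1} max_{‖x‖=1} xᵀ W(b)⁻¹ x` equals `1ᵀ σ* Ψ⁻¹ σ* 1`. -/


noncomputable def cMat {m : ℕ} (x y : Fin m → ℝ) : Matrix (Fin m) (Fin m) ℝ :=
  Matrix.of fun i j => (x i + y j)⁻¹

private lemma inv_row_op (a b : ℝ) (ha : a ≠ 0) (hb : b ≠ 0) :
    a⁻¹ = (b - a) * a⁻¹ * b⁻¹ + b⁻¹ := by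
  field_simp
  ring

theorem det_cMat_pos : ∀ (m : ℕ) (x y : Fin m → ℝ),
    (∀ i, 0 < x i) → (∀ j, 0 < y j) → StrictMono x → StrictMono y →
    0 < (cMat x y).det := by
  intro m
  induction m with
  | zero => intro x y _ _ _ _; simp [Matrix.det_fin_zero]
  | succ m ih =>
    intro x y hxp hyp hx hy
    have hxy : ∀ i j, 0 < x i + y j := fun i j => add_pos (hxp i) (hyp j)
    have hxyne : ∀ i j, x i + y j ≠ 0 := fun i j => (hxy i j).ne'
    set B₂ : Matrix (Fin (m+1)) (Fin (m+1)) ℝ := Matrix.of fun i j =>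
      Fin.cases (motive := fun _ => ℝ) 1
        (fun i' => (x 0 - x i'.succ) * (x i'.succ + y j)⁻¹) i with hB₂
    set B₃ : Matrix (Fin (m+1)) (Fin (m+1)) ℝ := Matrix.of fun i j =>
      Fin.cases (motive := fun _ => ℝ) 1 (fun i' => (x i'.succ + y j)⁻¹) i with hB₃
    -- row operations: subtract row 0 from the others, extract factors
    have step1 : (cMat x y).det =
        ((Matrix.of fun i j => (x 0 + y j)⁻¹ * B₂ i j) :
          Matrix (Fin (m+1)) (Fin (m+1)) ℝ).det := by
      apply det_eq_of_forall_row_eq_smul_add_const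
        (fun i => Fin.cases (motive := fun _ => ℝ) 0 (fun _ => 1) i) 0 (by simp)
      intro i j
      refine Fin.cases ?_ (fun i' => ?_) i
      · simp [cMat, hB₂]
      · simp only [hB₂, Matrix.of_apply, Fin.cases_succ, Fin.cases_zero, cMat, one_mul, mul_one]
        conv_lhs => rw [inv_row_op (x i'.succ + y j) (x 0 + y j) (hxyne _ _) (hxyne _ _)]
        ring
    have step2 : ((Matrix.of fun i j => (x 0 + y j)⁻¹ * B₂ i j) :
          Matrix (Fin (m+1)) (Fin (m+1)) ℝ).det =
        (∏ j, (x 0 + y j)⁻¹) * B₂.det := det_mul_row _ _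
    have step3 : B₂.det =
        (∏ i, (Fin.cases (motive := fun _ => ℝ) 1 (fun i' => x 0 - x i'.succ) i)) * B₃.det := by
      rw [show B₂ = Matrix.of fun i j =>
        (Fin.cases (motive := fun _ => ℝ) 1 (fun i' => x 0 - x i'.succ) i) * B₃ i j by
          ext i j
          refine Fin.cases ?_ (fun i' => ?_) i <;> simp [hB₂, hB₃]]
      exact det_mul_column _ _
    -- column operations on B₃
    set C₂ : Matrix (Fin (m+1)) (Fin (m+1)) ℝ := Matrix.of fun i j =>
      Fin.cases (motive := fun _ => ℝ)
        (Fin.cases (motive := fun _ => ℝ) 1 (fun _ => 0) j)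
        (fun i' => Fin.cases (motive := fun _ => ℝ) ((x i'.succ + y 0)⁻¹)
          (fun j' => (y 0 - y j'.succ) * ((x i'.succ + y j'.succ)⁻¹ * (x i'.succ + y 0)⁻¹)) j) i
      with hC₂
    have step4 : B₃.det = C₂.det := by
      rw [← Matrix.det_transpose B₃, ← Matrix.det_transpose C₂]
      apply det_eq_of_forall_row_eq_smul_add_const
        (fun j => Fin.cases (motive := fun _ => ℝ) 0 (fun _ => 1) j) 0 (by simp)
      intro j i
      simp only [Matrix.transpose_apply]
      refine Fin.cases ?_ (fun j' => ?_) j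
      · refine Fin.cases ?_ (fun i' => ?_) i <;> simp [hB₃, hC₂]
      · refine Fin.cases ?_ (fun i' => ?_) i
        · simp [hB₃, hC₂]
        · simp only [hB₃, hC₂, Matrix.of_apply, Fin.cases_succ, Fin.cases_zero, one_mul]
          conv_lhs => rw [inv_row_op (x i'.succ + y j'.succ) (x i'.succ + y 0) (hxyne _ _) (hxyne _ _)]
          ring
    -- extract factors from C₂
    set C₃ : Matrix (Fin (m+1)) (Fin (m+1)) ℝ := Matrix.of fun i j =>
      Fin.cases (motive := fun _ => ℝ)
        (Fin.cases (motive := fun _ => ℝ) 1 (fun _ => 0) j)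
        (fun i' => Fin.cases (motive := fun _ => ℝ) 1
          (fun j' => (x i'.succ + y j'.succ)⁻¹) j) i with hC₃
    have step5 : C₂.det =
        (∏ j, (Fin.cases (motive := fun _ => ℝ) 1 (fun j' => y 0 - y j'.succ) j)) *
        ((∏ i, (Fin.cases (motive := fun _ => ℝ) 1 (fun i' => (x i'.succ + y 0)⁻¹) i)) *
          C₃.det) := by
      rw [show C₂ = Matrix.of fun i j =>
          (Fin.cases (motive := fun _ => ℝ) 1 (fun j' => y 0 - y j'.succ) j) *
          ((Matrix.of fun i j => (Fin.cases (motive := fun _ => ℝ) 1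
            (fun i' => (x i'.succ + y 0)⁻¹) i) * C₃ i j) i j) by
        ext i j
        refine Fin.cases ?_ (fun i' => ?_) i <;> refine Fin.cases ?_ (fun j' => ?_) j <;>
          simp only [hC₂, hC₃, Matrix.of_apply, Fin.cases_zero, Fin.cases_succ] <;> ring]
      rw [det_mul_row, det_mul_column]
    -- expand along first row
    have step6 : C₃.det = (cMat (x ∘ Fin.succ) (y ∘ Fin.succ)).det := by
      rw [Matrix.det_succ_row_zero, Fin.sum_univ_succ]
      have h0 : ∀ j' : Fin m, C₃ 0 j'.succ = 0 := fun j' => by simp [hC₃]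
      simp only [h0, mul_zero, zero_mul, Finset.sum_const_zero, add_zero]
      have : C₃ 0 0 = 1 := by simp [hC₃]
      rw [this]
      have : (C₃.submatrix Fin.succ (Fin.succAbove 0)) = cMat (x ∘ Fin.succ) (y ∘ Fin.succ) := by
        ext i j
        simp [hC₃, Matrix.submatrix, Fin.succAbove_zero, cMat]
      rw [this]
      simp
    -- combine everything
    rw [step1, step2, step3, step4, step5, step6]
    have hprod1 : 0 < ∏ j, (x 0 + y j)⁻¹ :=
      Finset.prod_pos fun j _ => inv_pos.mpr (hxy 0 j)
    have hprod4 : 0 < ∏ i, (Fin.cases (motive := fun _ => ℝ) 1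
        (fun i' => (x i'.succ + y 0)⁻¹) i) := by
      apply Finset.prod_pos
      intro i _
      refine Fin.cases ?_ (fun i' => ?_) i
      · simp
      · simp only [Fin.cases_succ]
        exact inv_pos.mpr (hxy _ 0)
    have hdet : 0 < (cMat (x ∘ Fin.succ) (y ∘ Fin.succ)).det := by
      apply ih
      · intro i; exact hxp _
      · intro j; exact hyp _
      · exact hx.comp Fin.strictMono_succ
      · exact hy.comp Fin.strictMono_succ
    have hprod23 : 0 < (∏ i, (Fin.cases (motive := fun _ => ℝ) 1 (fun i' => x 0 - x i'.succ) i)) *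
        (∏ j, (Fin.cases (motive := fun _ => ℝ) 1 (fun j' => y 0 - y j'.succ) j)) := by
      rw [← Finset.prod_mul_distrib]
      apply Finset.prod_pos
      intro i _
      refine Fin.cases ?_ (fun i' => ?_) i
      · norm_num
      · simp only [Fin.cases_succ]
        exact mul_pos_of_neg_of_neg
          (sub_neg.mpr (hx (Fin.succ_pos i')))
          (sub_neg.mpr (hy (Fin.succ_pos i')))
    nlinarith [mul_pos (mul_pos (mul_pos hprod1 hprod23) hprod4) hdet]


-- quadratic form expansion
lemma quad_expand {n : ℕ} (M : Matrix (Fin n) (Fin n) ℝ) (x : Fin n → ℝ) :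
    x ⬝ᵥ M *ᵥ x = ∑ i, ∑ j, M i j * x i * x j := by
  simp only [dotProduct, mulVec, Finset.mul_sum]
  exact Finset.sum_congr rfl fun i _ => Finset.sum_congr rfl fun j _ => by ring

lemma dot_mulVec_symm {n : ℕ} {M : Matrix (Fin n) (Fin n) ℝ}
    (hsym : ∀ i j, M i j = M j i) (a b : Fin n → ℝ) :
    a ⬝ᵥ M *ᵥ b = b ⬝ᵥ M *ᵥ a := by
  simp only [dotProduct, mulVec, Finset.mul_sum]
  rw [Finset.sum_comm]
  exact Finset.sum_congr rfl fun i _ => Finset.sum_congr rfl fun j _ => by rw [hsym j i]; ring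

-- exp integral
lemma integral_exp_neg_mul (c : ℝ) (hc : 0 < c) :
    ∫ t in Set.Ioi (0:ℝ), Real.exp (-(c * t)) = c⁻¹ := by
  have h := integral_comp_mul_left_Ioi (fun s => Real.exp (-s)) 0 hc
  simp only [mul_zero, integral_exp_neg_Ioi, Real.exp_zero, smul_eq_mul, mul_one] at h
  rw [show (fun t => Real.exp (-(c * t))) = fun t => Real.exp (-(c * t)) from rfl]
  simpa using h

-- positive semidefiniteness of the Cauchy quadratic form
lemma cauchy_quad_nonneg {n : ℕ} (lam : Fin n → ℝ) (hpos : ∀ i, 0 < lam i) (v : Fin n → ℝ) :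
    0 ≤ ∑ i, ∑ j, (lam i + lam j)⁻¹ * v i * v j := by
  have key : ∀ i j : Fin n, (lam i + lam j)⁻¹ * v i * v j
      = ∫ t in Set.Ioi (0:ℝ), (v i * Real.exp (-(lam i * t))) * (v j * Real.exp (-(lam j * t))) := by
    intro i j
    have : ∀ t : ℝ, (v i * Real.exp (-(lam i * t))) * (v j * Real.exp (-(lam j * t)))
        = (v i * v j) * Real.exp (-((lam i + lam j) * t)) := by
      intro t
      rw [show -((lam i + lam j) * t) = -(lam i * t) + -(lam j * t) by ring, Real.exp_add]
      ring
    simp only [this]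
    rw [MeasureTheory.integral_const_mul, integral_exp_neg_mul _ (add_pos (hpos i) (hpos j))]
    ring
  have integ : ∀ (i j : Fin n), IntegrableOn
      (fun t => (v i * Real.exp (-(lam i * t))) * (v j * Real.exp (-(lam j * t)))) (Set.Ioi 0) := by
    intro i j
    have : ∀ t : ℝ, (v i * Real.exp (-(lam i * t))) * (v j * Real.exp (-(lam j * t)))
        = (v i * v j) * Real.exp (-(lam i + lam j) * t) := by
      intro t
      rw [show -(lam i + lam j) * t = -(lam i * t) + -(lam j * t) by ring, Real.exp_add]
      ring
    simp only [this]
    exact (exp_neg_integrableOn_Ioi 0 (add_pos (hpos i) (hpos j))).const_mul _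
  calc (0:ℝ) ≤ ∫ t in Set.Ioi (0:ℝ), (∑ i, v i * Real.exp (-(lam i * t)))^2 := by
        apply MeasureTheory.setIntegral_nonneg measurableSet_Ioi
        intro t _
        positivity
    _ = ∫ t in Set.Ioi (0:ℝ), ∑ i, ∑ j,
          (v i * Real.exp (-(lam i * t))) * (v j * Real.exp (-(lam j * t))) := by
        congr 1
        funext t
        rw [sq, Finset.sum_mul_sum]
    _ = ∑ i, ∑ j, ∫ t in Set.Ioi (0:ℝ),
          (v i * Real.exp (-(lam i * t))) * (v j * Real.exp (-(lam j * t))) := by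
        rw [MeasureTheory.integral_finset_sum]
        · exact Finset.sum_congr rfl fun i _ =>
            (MeasureTheory.integral_finset_sum _ fun j _ => integ i j)
        · exact fun i _ => MeasureTheory.integrable_finset_sum _ fun j _ => integ i j
    _ = ∑ i, ∑ j, (lam i + lam j)⁻¹ * v i * v j := by
        exact Finset.sum_congr rfl fun i _ => Finset.sum_congr rfl fun j _ => (key i j).symm

-- spectrum membership from eigenvector
lemma mem_spectrum_of_eigvec {n : ℕ} (W : Matrix (Fin n) (Fin n) ℝ) (μ : ℝ) (v : Fin n → ℝ)
    (hv : v ≠ 0) (h : W *ᵥ v = μ • v) : μ ∈ spectrum ℝ W := by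
  rw [spectrum.mem_iff]
  intro hunit
  rw [Matrix.isUnit_iff_isUnit_det] at hunit
  have hdet : ((algebraMap ℝ (Matrix (Fin n) (Fin n) ℝ)) μ - W).det = 0 := by
    rw [← Matrix.exists_mulVec_eq_zero_iff]
    refine ⟨v, hv, ?_⟩
    rw [Matrix.sub_mulVec, Matrix.algebraMap_eq_diagonal]
    funext i
    simp [Matrix.mulVec_diagonal, h, Pi.algebraMap_apply, Algebra.algebraMap_self]
  rw [hdet] at hunit
  exact (not_isUnit_zero : ¬ IsUnit (0:ℝ)) hunit

lemma eigvec_of_mem_spectrum {n : ℕ} (W : Matrix (Fin n) (Fin n) ℝ) (μ : ℝ)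
    (h : μ ∈ spectrum ℝ W) : ∃ v, v ≠ 0 ∧ W *ᵥ v = μ • v := by
  rw [spectrum.mem_iff] at h
  have hdet : ((algebraMap ℝ (Matrix (Fin n) (Fin n) ℝ)) μ - W).det = 0 := by
    by_contra hne
    exact h (Matrix.isUnit_iff_isUnit_det _ |>.mpr (isUnit_iff_ne_zero.mpr hne))
  rw [← Matrix.exists_mulVec_eq_zero_iff] at hdet
  obtain ⟨v, hv, hv0⟩ := hdet
  refine ⟨v, hv, ?_⟩
  rw [Matrix.sub_mulVec, Matrix.algebraMap_eq_diagonal, sub_eq_zero] at hv0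
  funext i
  have := congrFun hv0 i
  simp only [Matrix.mulVec_diagonal, Pi.algebraMap_apply, Algebra.algebraMap_self] at this
  simp [← this, Matrix.mulVec_diagonal]


-- Laplacian-type PSD: for symmetric entrywise-nonnegative B,
-- ∑ᵢⱼ Bᵢⱼ xᵢ xⱼ ≤ ∑ᵢ (∑ⱼ Bᵢⱼ) xᵢ²
lemma lap_quad {n : ℕ} (B : Matrix (Fin n) (Fin n) ℝ) (hsym : ∀ i j, B i j = B j i)
    (hnn : ∀ i j, 0 ≤ B i j) (x : Fin n → ℝ) :
    ∑ i, ∑ j, B i j * x i * x j ≤ ∑ i, (∑ j, B i j) * x i ^ 2 := by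
  have swap : ∑ i, ∑ j, B i j * x j ^ 2 = ∑ i, ∑ j, B i j * x i ^ 2 := by
    rw [Finset.sum_comm]
    exact Finset.sum_congr rfl fun i _ => Finset.sum_congr rfl fun j _ => by rw [hsym j i]
  have key : 0 ≤ ∑ i, ∑ j, B i j * (x i - x j)^2 :=
    Finset.sum_nonneg fun i _ => Finset.sum_nonneg fun j _ =>
      mul_nonneg (hnn i j) (sq_nonneg _)
  have e1 : ∀ i, ∑ j, B i j * (x i - x j)^2
      = ∑ j, (B i j * x i ^ 2 + B i j * x j ^ 2 - 2 * (B i j * x i * x j)) :=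
    fun i => Finset.sum_congr rfl fun j _ => by ring
  have expand : ∑ i, ∑ j, B i j * (x i - x j)^2
      = (∑ i, ∑ j, B i j * x i ^ 2) + (∑ i, ∑ j, B i j * x j ^ 2)
        - 2 * ∑ i, ∑ j, B i j * x i * x j := by
    calc ∑ i, ∑ j, B i j * (x i - x j)^2
        = ∑ i, ((∑ j, B i j * x i ^ 2) + (∑ j, B i j * x j ^ 2)
            - ∑ j, 2 * (B i j * x i * x j)) :=
          Finset.sum_congr rfl fun i _ => by
            rw [e1 i, Finset.sum_sub_distrib, Finset.sum_add_distrib]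
      _ = (∑ i, ∑ j, B i j * x i ^ 2) + (∑ i, ∑ j, B i j * x j ^ 2)
            - ∑ i, ∑ j, 2 * (B i j * x i * x j) := by
          rw [Finset.sum_sub_distrib, Finset.sum_add_distrib]
      _ = _ := by
          simp only [← Finset.mul_sum]
  have hds : ∑ i, (∑ j, B i j) * x i ^ 2 = ∑ i, ∑ j, B i j * x i ^ 2 := by
    exact Finset.sum_congr rfl fun i _ => by rw [Finset.sum_mul]
  rw [hds]
  nlinarith [key, expand, swap]

-- Rayleigh: some spectrum element is below any Rayleigh quotient
lemma exists_spectrum_le_rayleigh {n : ℕ} (hn : 0 < n) (W : Matrix (Fin n) (Fin n) ℝ)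
    (hW : W.IsHermitian) (x : Fin n → ℝ) :
    ∃ μ ∈ spectrum ℝ W, μ * (x ⬝ᵥ x) ≤ x ⬝ᵥ W *ᵥ x := by
  have hne : (Finset.univ : Finset (Fin n)).Nonempty := ⟨⟨0, hn⟩, Finset.mem_univ _⟩
  obtain ⟨i0, -, hmin⟩ := Finset.exists_min_image Finset.univ hW.eigenvalues hne
  set μ := hW.eigenvalues i0 with hμ
  refine ⟨μ, hW.eigenvalues_mem_spectrum_real i0, ?_⟩
  set U : Matrix (Fin n) (Fin n) ℝ := (Matrix.IsHermitian.eigenvectorUnitary hW : Matrix (Fin n) (Fin n) ℝ) with hU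
  have hUU : U * star U = 1 := Matrix.mem_unitaryGroup_iff.mp (Matrix.IsHermitian.eigenvectorUnitary hW).2
  have hdiag : W - μ • (1 : Matrix (Fin n) (Fin n) ℝ)
      = U * (Matrix.diagonal (fun i => hW.eigenvalues i - μ)) * star U := by
    have hst := hW.spectral_theorem
    have h1 : μ • (1 : Matrix (Fin n) (Fin n) ℝ) = U * (μ • (1:Matrix (Fin n) (Fin n) ℝ)) * star U := by
      rw [Matrix.mul_smul, Matrix.smul_mul, mul_one, hUU]
    have h2 : (Matrix.diagonal ((RCLike.ofReal ∘ hW.eigenvalues) : Fin n → ℝ))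
        - μ • (1 : Matrix (Fin n) (Fin n) ℝ)
        = Matrix.diagonal (fun i => hW.eigenvalues i - μ) := by
      ext i j
      by_cases h : i = j
      · subst h; simp [Matrix.diagonal, Matrix.one_apply]
      · simp [Matrix.diagonal, Matrix.one_apply, h]
    calc W - μ • 1 = U * (Matrix.diagonal ((RCLike.ofReal ∘ hW.eigenvalues) : Fin n → ℝ)) * star U
          - U * (μ • (1:Matrix (Fin n) (Fin n) ℝ)) * star U := by
            rw [← h1]; conv_lhs => rw [hst]
            rw [Unitary.conjStarAlgAut_apply]
      _ = U * ((Matrix.diagonal ((RCLike.ofReal ∘ hW.eigenvalues) : Fin n → ℝ))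
            - μ • (1:Matrix (Fin n) (Fin n) ℝ)) * star U := by rw [Matrix.mul_sub, Matrix.sub_mul]
      _ = _ := by rw [h2]
  have hpsd : Matrix.PosSemidef (W - μ • (1 : Matrix (Fin n) (Fin n) ℝ)) := by
    rw [hdiag, Matrix.star_eq_conjTranspose]
    exact Matrix.PosSemidef.mul_mul_conjTranspose_same
      (Matrix.posSemidef_diagonal_iff.mpr fun i => sub_nonneg.mpr (hmin i (Finset.mem_univ i))) U
  have := hpsd.dotProduct_mulVec_nonneg x
  rw [star_trivial, Matrix.sub_mulVec, Matrix.smul_mulVec, Matrix.one_mulVec,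
    dotProduct_sub, dotProduct_smul] at this
  simp only [smul_eq_mul] at this
  linarith

theorem max_smallest_eigenvalue (n : ℕ) (hn : 0 < n) (lam : Fin n → ℝ)
    (hpos : ∀ i, 0 < lam i) (hmono : StrictMono lam) :
    (∀ i, 0 < (sigmaStar n * (cauchyPsi n lam)⁻¹ * sigmaStar n).mulVec
        (fun _ : Fin n => (1 : ℝ)) i) ∧
      IsGreatest
        {r : ℝ | ∃ b : Fin n → ℝ, ∑ i, b i ^ 2 = 1 ∧
          sInf (spectrum ℝ (cauchyW n lam b)) = r}
        ((fun _ : Fin n => (1 : ℝ)) ⬝ᵥ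
          (sigmaStar n * (cauchyPsi n lam)⁻¹ * sigmaStar n).mulVec
            fun _ : Fin n => (1 : ℝ))⁻¹ := by
  haveI : Nonempty (Fin n) := ⟨⟨0, hn⟩⟩
  set u : Fin n → ℝ := fun i => (-1 : ℝ) ^ (i : ℕ) with hu_def
  have hu2 : ∀ i, u i * u i = 1 := fun i => by
    show ((-1:ℝ) ^ (i:ℕ)) * ((-1:ℝ) ^ (i:ℕ)) = 1
    rw [← pow_add]
    exact Even.neg_one_pow ⟨(i:ℕ), rfl⟩
  have hu0 : ∀ i, u i ≠ 0 := fun i => by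
    intro h
    have h2 := hu2 i
    rw [h, mul_zero] at h2
    exact zero_ne_one h2
  set Ψ := cauchyPsi n lam with hΨ_def
  have hPsym : ∀ i j, Ψ i j = Ψ j i := fun i j => by
    simp [hΨ_def, cauchyPsi, add_comm]
  have hMat : Ψ = cMat lam lam := by
    ext i j; simp [hΨ_def, cauchyPsi, cMat, one_div]
  have hdet : 0 < Ψ.det := by
    rw [hMat]; exact det_cMat_pos n lam lam hpos hpos hmono hmono
  have hdetu : IsUnit Ψ.det := isUnit_iff_ne_zero.mpr hdet.ne'
  set A := Ψ⁻¹ with hA_def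
  have hinv : Ψ * A = 1 := Matrix.mul_nonsing_inv Ψ hdetu
  have hinv' : A * Ψ = 1 := Matrix.nonsing_inv_mul Ψ hdetu
  have hAsym : ∀ i j, A i j = A j i := by
    have htr : Aᵀ = A := by
      rw [hA_def, Matrix.transpose_nonsing_inv]
      congr 1
      ext i j
      exact hPsym j i
    intro i j
    conv_lhs => rw [← htr]
    rfl
  -- sign pattern of the inverse
  have hsign : ∀ i j, 0 < u i * u j * A i j := by
    rcases n with - | m
    · exact absurd hn (lt_irrefl 0)
    intro i j
    have hAij : A i j = (Ring.inverse Ψ.det) * Ψ.adjugate i j := by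
      rw [hA_def, Matrix.inv_def]
      simp [Matrix.smul_apply, smul_eq_mul]
    have hadj : Ψ.adjugate i j =
        (-1 : ℝ) ^ ((j:ℕ) + (i:ℕ)) * (Ψ.submatrix j.succAbove i.succAbove).det :=
      Matrix.adjugate_fin_succ_eq_det_submatrix Ψ i j
    have hsub : Ψ.submatrix j.succAbove i.succAbove
        = cMat (lam ∘ j.succAbove) (lam ∘ i.succAbove) := by
      ext a b
      simp [hΨ_def, cauchyPsi, cMat, Matrix.submatrix, one_div]
    have hsubdet : 0 < (Ψ.submatrix j.succAbove i.succAbove).det := by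
      rw [hsub]
      exact det_cMat_pos m _ _ (fun a => hpos _) (fun a => hpos _)
        (hmono.comp (Fin.strictMono_succAbove j)) (hmono.comp (Fin.strictMono_succAbove i))
    have hsgn1 : u i * u j * (-1 : ℝ) ^ ((j:ℕ) + (i:ℕ)) = 1 := by
      simp only [hu_def, ← pow_add]
      exact Even.neg_one_pow ⟨(i:ℕ) + (j:ℕ), by ring⟩
    rw [hAij, hadj, Ring.inverse_eq_inv]
    calc (0:ℝ) < (Ψ.det)⁻¹ * ((Ψ.submatrix j.succAbove i.succAbove).det) *
        (u i * u j * (-1 : ℝ) ^ ((j:ℕ) + (i:ℕ))) := by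
          rw [hsgn1, mul_one]
          exact mul_pos (inv_pos.mpr hdet) hsubdet
      _ = u i * u j * ((Ψ.det)⁻¹ * ((-1:ℝ) ^ ((j:ℕ)+(i:ℕ)) * (Ψ.submatrix j.succAbove i.succAbove).det)) := by
          ring
  set p : Fin n → ℝ := fun i => ∑ j, u i * A i j * u j with hp_def
  have hp : ∀ i, 0 < p i := fun i =>
    Finset.sum_pos (fun j _ => by have := hsign i j; nlinarith) Finset.univ_nonempty
  have hB : ∀ i j, (sigmaStar n * A * sigmaStar n) i j = u i * A i j * u j := by
    intro i j
    rw [sigmaStar, Matrix.mul_diagonal, Matrix.diagonal_mul]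
  have hmulvec1 : ∀ i, ((sigmaStar n * A * sigmaStar n) *ᵥ (fun _ => (1:ℝ))) i = p i := by
    intro i
    simp only [Matrix.mulVec, dotProduct, hB, mul_one, hp_def]
  constructor
  · intro i
    rw [show (sigmaStar n * (cauchyPsi n lam)⁻¹ * sigmaStar n).mulVec (fun _ => (1:ℝ)) i
      = p i from hmulvec1 i]
    exact hp i
  set S : ℝ := ∑ i, p i with hS_def
  have hS : 0 < S := Finset.sum_pos (fun i _ => hp i) Finset.univ_nonempty
  have htarget : ((fun _ : Fin n => (1:ℝ)) ⬝ᵥ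
      (sigmaStar n * (cauchyPsi n lam)⁻¹ * sigmaStar n).mulVec fun _ : Fin n => (1:ℝ)) = S := by
    simp only [dotProduct, one_mul]
    exact Finset.sum_congr rfl fun i _ => hmulvec1 i
  rw [htarget]
  -- the vector v = Ψ⁻¹ u
  set v : Fin n → ℝ := A *ᵥ u with hv_def
  have hpv : ∀ i, p i = u i * v i := by
    intro i
    rw [hp_def, hv_def]
    simp only [Matrix.mulVec, dotProduct, Finset.mul_sum]
    exact Finset.sum_congr rfl fun j _ => by ring
  have hv : ∀ i, v i = u i * p i := by
    intro i
    rw [hpv i, ← mul_assoc, hu2 i, one_mul]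
  have hΨv : Ψ *ᵥ v = u := by
    rw [hv_def, Matrix.mulVec_mulVec, hinv, Matrix.one_mulVec]
  -- PSD facts
  have hPsiPSD : ∀ w : Fin n → ℝ, 0 ≤ w ⬝ᵥ Ψ *ᵥ w := by
    intro w
    rw [quad_expand]
    have := cauchy_quad_nonneg lam hpos w
    convert this using 2 with i
    refine Finset.sum_congr rfl fun j _ => ?_
    simp [hΨ_def, cauchyPsi, one_div]
  have hApsd : ∀ w : Fin n → ℝ, 0 ≤ w ⬝ᵥ A *ᵥ w := by
    intro w
    have h1 : Ψ *ᵥ (A *ᵥ w) = w := by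
      rw [Matrix.mulVec_mulVec, hinv, Matrix.one_mulVec]
    have h2 := hPsiPSD (A *ᵥ w)
    rw [h1] at h2
    rwa [dotProduct_comm] at h2
  have hlapA : ∀ w : Fin n → ℝ, w ⬝ᵥ A *ᵥ w ≤ ∑ i, p i * w i ^ 2 := by
    intro w
    have hlap := lap_quad (Matrix.of fun i j => u i * A i j * u j)
      (fun i j => by rw [Matrix.of_apply, Matrix.of_apply, hAsym i j]; ring)
      (fun i j => by rw [Matrix.of_apply]; nlinarith [hsign i j]) (fun i => u i * w i)
    have hL : ∑ i, ∑ j, (Matrix.of fun i j => u i * A i j * u j) i j *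
        (u i * w i) * (u j * w j) = w ⬝ᵥ A *ᵥ w := by
      rw [quad_expand]
      refine Finset.sum_congr rfl fun i _ => Finset.sum_congr rfl fun j _ => ?_
      simp only [Matrix.of_apply]
      calc u i * A i j * u j * (u i * w i) * (u j * w j)
          = (u i * u i) * (u j * u j) * (A i j * w i * w j) := by ring
        _ = A i j * w i * w j := by rw [hu2 i, hu2 j]; ring
    have hR : ∑ i, (∑ j, (Matrix.of fun i j => u i * A i j * u j) i j) * (u i * w i) ^ 2
        = ∑ i, p i * w i ^ 2 := by
      refine Finset.sum_congr rfl fun i _ => ?_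
      have : (u i * w i)^2 = w i ^2 := by
        calc (u i * w i)^2 = (u i * u i) * w i ^2 := by ring
          _ = w i ^ 2 := by rw [hu2 i]; ring
      rw [this]
      rfl
    rw [hL, hR] at hlap
    exact hlap
  have hdiagPsi : ∀ w : Fin n → ℝ, ∑ i, (p i)⁻¹ * w i ^ 2 ≤ w ⬝ᵥ Ψ *ᵥ w := by
    intro w
    set y : Fin n → ℝ := fun i => (p i)⁻¹ * w i with hy_def
    have h0 : 0 ≤ (Ψ *ᵥ w - y) ⬝ᵥ A *ᵥ (Ψ *ᵥ w - y) := hApsd _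
    have hAΨw : A *ᵥ (Ψ *ᵥ w) = w := by
      rw [Matrix.mulVec_mulVec, hinv', Matrix.one_mulVec]
    have hexp : (Ψ *ᵥ w - y) ⬝ᵥ A *ᵥ (Ψ *ᵥ w - y)
        = w ⬝ᵥ Ψ *ᵥ w - 2 * (y ⬝ᵥ w) + y ⬝ᵥ A *ᵥ y := by
      rw [Matrix.mulVec_sub, sub_dotProduct, dotProduct_sub,
        dotProduct_sub, hAΨw]
      have e1 : (Ψ *ᵥ w) ⬝ᵥ w = w ⬝ᵥ Ψ *ᵥ w := dotProduct_comm _ _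
      have e2 : (Ψ *ᵥ w) ⬝ᵥ (A *ᵥ y) = y ⬝ᵥ w := by
        rw [dot_mulVec_symm hAsym (Ψ *ᵥ w) y, hAΨw]
      rw [e1, e2]
      ring
    have hyAy : y ⬝ᵥ A *ᵥ y ≤ ∑ i, p i * y i ^ 2 := hlapA y
    have hyw : y ⬝ᵥ w = ∑ i, (p i)⁻¹ * w i ^ 2 := by
      simp only [dotProduct, hy_def]
      exact Finset.sum_congr rfl fun i _ => by ring
    have hysq : ∑ i, p i * y i ^ 2 = ∑ i, (p i)⁻¹ * w i ^ 2 := by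
      refine Finset.sum_congr rfl fun i _ => ?_
      show p i * ((p i)⁻¹ * w i) ^ 2 = (p i)⁻¹ * w i ^ 2
      calc p i * ((p i)⁻¹ * w i) ^ 2 = (p i * (p i)⁻¹) * ((p i)⁻¹ * w i ^ 2) := by ring
        _ = (p i)⁻¹ * w i ^ 2 := by rw [mul_inv_cancel₀ (hp i).ne', one_mul]
    rw [hexp] at h0
    rw [hysq] at hyAy
    rw [hyw] at h0
    linarith
  -- the optimal b
  set b : Fin n → ℝ := fun i => Real.sqrt (p i / S) with hb_def
  have hbpos : ∀ i, 0 < b i := fun i => Real.sqrt_pos.mpr (div_pos (hp i) hS)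
  have hb2 : ∀ i, b i ^ 2 = p i / S := fun i => Real.sq_sqrt (div_pos (hp i) hS).le
  have hbsum : ∑ i, b i ^ 2 = 1 := by
    simp only [hb2]
    rw [← Finset.sum_div, ← hS_def]
    field_simp
  set W := cauchyW n lam b with hW_def
  have hWmulVec : ∀ (c : Fin n → ℝ) (w : Fin n → ℝ), (cauchyW n lam c) *ᵥ w
      = Matrix.diagonal c *ᵥ (Ψ *ᵥ (Matrix.diagonal c *ᵥ w)) := by
    intro c w
    rw [cauchyW, ← hΨ_def, Matrix.mulVec_mulVec, Matrix.mulVec_mulVec]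
  set z : Fin n → ℝ := fun i => u i * b i with hz_def
  have hz0 : z ≠ 0 := by
    intro h
    have := congrFun h ⟨0, hn⟩
    simp only [hz_def, Pi.zero_apply] at this
    exact (mul_ne_zero (hu0 _) (hbpos _).ne') this
  have hWz : W *ᵥ z = S⁻¹ • z := by
    rw [hW_def, hWmulVec b z]
    have h1 : Matrix.diagonal b *ᵥ z = S⁻¹ • v := by
      funext i
      rw [Matrix.mulVec_diagonal]
      simp only [Pi.smul_apply, smul_eq_mul, hz_def, hv i]
      have : b i * (u i * b i) = u i * (b i^2) := by ring
      rw [this, hb2 i, div_eq_inv_mul]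
      ring
    rw [h1, Matrix.mulVec_smul, hΨv, Matrix.mulVec_smul]
    congr 1
    funext i
    rw [Matrix.mulVec_diagonal, hz_def]
    ring
  have hspec_mem : S⁻¹ ∈ spectrum ℝ W := mem_spectrum_of_eigvec W S⁻¹ z hz0 hWz
  have hWlb : ∀ w : Fin n → ℝ, S⁻¹ * (w ⬝ᵥ w) ≤ w ⬝ᵥ W *ᵥ w := by
    intro w
    have hq : w ⬝ᵥ W *ᵥ w = (fun i => b i * w i) ⬝ᵥ Ψ *ᵥ (fun i => b i * w i) := by
      rw [quad_expand, quad_expand]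
      refine Finset.sum_congr rfl fun i _ => Finset.sum_congr rfl fun j _ => ?_
      have hWe : W i j = b i * Ψ i j * b j := by
        rw [hW_def, cauchyW, ← hΨ_def, Matrix.mul_diagonal, Matrix.diagonal_mul]
      rw [hWe]
      ring
    have hd := hdiagPsi (fun i => b i * w i)
    have hsum : ∑ i, (p i)⁻¹ * (b i * w i) ^ 2 = S⁻¹ * (w ⬝ᵥ w) := by
      rw [dotProduct, Finset.mul_sum]
      refine Finset.sum_congr rfl fun i _ => ?_
      calc (p i)⁻¹ * (b i * w i)^2 = (p i)⁻¹ * p i * (S⁻¹ * (w i * w i)) := by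
            rw [mul_pow, hb2 i]; ring
        _ = S⁻¹ * (w i * w i) := by rw [inv_mul_cancel₀ (hp i).ne', one_mul]
    rw [hq, ← hsum]
    exact hd
  have hInfLB : ∀ μ ∈ spectrum ℝ W, S⁻¹ ≤ μ := by
    intro μ hμ
    obtain ⟨w, hw0, hww⟩ := eigvec_of_mem_spectrum W μ hμ
    have hdot : 0 < w ⬝ᵥ w := by
      have hnn : 0 ≤ w ⬝ᵥ w := Finset.sum_nonneg fun i _ => mul_self_nonneg (w i)
      rcases lt_or_eq_of_le hnn with h | h
      · exact h
      · exact absurd (dotProduct_self_eq_zero.mp h.symm) hw0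
    have : w ⬝ᵥ W *ᵥ w = μ * (w ⬝ᵥ w) := by
      rw [hww, dotProduct_smul]
      simp [smul_eq_mul]
    have h2 := hWlb w
    rw [this] at h2
    exact le_of_mul_le_mul_right (by linarith) hdot
  have hsInf_eq : sInf (spectrum ℝ W) = S⁻¹ :=
    le_antisymm (csInf_le ⟨S⁻¹, fun μ hμ => hInfLB μ hμ⟩ hspec_mem)
      (le_csInf ⟨S⁻¹, hspec_mem⟩ hInfLB)
  constructor
  · exact ⟨b, hbsum, hsInf_eq⟩
  -- upper bound
  rintro r ⟨c, hcsum, rfl⟩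
  have hbdd : BddBelow (spectrum ℝ (cauchyW n lam c)) := (Matrix.finite_spectrum _).bddBelow
  by_cases hcz : ∃ i0, c i0 = 0
  · obtain ⟨i0, hi0⟩ := hcz
    have hmem0 : (0:ℝ) ∈ spectrum ℝ (cauchyW n lam c) := by
      apply mem_spectrum_of_eigvec _ _ (Pi.single i0 1)
      · intro h
        have := congrFun h i0
        simp at this
      · have hdz : Matrix.diagonal c *ᵥ Pi.single i0 1 = 0 := by
          funext i
          rw [Matrix.mulVec_diagonal]
          by_cases h : i = i0
          · subst h; simp [hi0]
          · simp [Pi.single_eq_of_ne h]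
        rw [hWmulVec c, hdz, Matrix.mulVec_zero, Matrix.mulVec_zero, zero_smul]
    calc sInf (spectrum ℝ (cauchyW n lam c)) ≤ 0 := csInf_le hbdd hmem0
      _ ≤ S⁻¹ := (inv_pos.mpr hS).le
  · push_neg at hcz
    set x : Fin n → ℝ := fun i => v i / c i with hx_def
    have hherm : (cauchyW n lam c).IsHermitian := by
      show (cauchyW n lam c)ᴴ = cauchyW n lam c
      ext i j
      simp only [Matrix.conjTranspose_apply, star_trivial, cauchyW,
        Matrix.mul_diagonal, Matrix.diagonal_mul]
      rw [show cauchyPsi n lam j i = cauchyPsi n lam i j from hPsym j i]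
      ring
    obtain ⟨μ, hμmem, hμle⟩ := exists_spectrum_le_rayleigh hn (cauchyW n lam c) hherm x
    have hxWx : x ⬝ᵥ (cauchyW n lam c) *ᵥ x = S := by
      have hq : x ⬝ᵥ (cauchyW n lam c) *ᵥ x = v ⬝ᵥ Ψ *ᵥ v := by
        rw [quad_expand, quad_expand]
        refine Finset.sum_congr rfl fun i _ => Finset.sum_congr rfl fun j _ => ?_
        have hWe : (cauchyW n lam c) i j = c i * Ψ i j * c j := by
          rw [cauchyW, ← hΨ_def, Matrix.mul_diagonal, Matrix.diagonal_mul]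
        rw [hWe]
        have hxi : x i = v i / c i := rfl
        have hxj : x j = v j / c j := rfl
        rw [hxi, hxj]
        field_simp [hcz i, hcz j]
      rw [hq]
      have : v ⬝ᵥ Ψ *ᵥ v = v ⬝ᵥ u := by
        rw [dot_mulVec_symm hPsym v v]  -- no-op, keep simple
        rw [hΨv]
      rw [this]
      rw [dotProduct]
      rw [hS_def]
      refine Finset.sum_congr rfl fun i _ => ?_
      rw [hpv i]
      ring
    have hxx : x ⬝ᵥ x = ∑ i, (p i / c i)^2 := by
      rw [dotProduct]
      refine Finset.sum_congr rfl fun i _ => ?_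
      show x i * x i = (p i / c i)^2
      have hxi : x i = v i / c i := rfl
      rw [hxi, hv i]
      have h2 : (u i * p i / c i) * (u i * p i / c i) = (u i * u i) * (p i / c i)^2 := by
        field_simp
      rw [h2, hu2 i, one_mul]
    have hCS : S^2 ≤ x ⬝ᵥ x := by
      rw [hxx]
      have := Finset.sum_mul_sq_le_sq_mul_sq Finset.univ (fun i => p i / c i) c
      have hps : ∑ i, (p i / c i) * c i = S := by
        rw [hS_def]
        exact Finset.sum_congr rfl fun i _ => div_mul_cancel₀ _ (hcz i)
      rw [hps] at this
      calc S^2 ≤ (∑ i, (p i / c i)^2) * (∑ i, c i ^2) := this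
        _ = ∑ i, (p i / c i)^2 := by rw [hcsum, mul_one]
    have hμS : μ ≤ S⁻¹ := by
      by_contra h
      push_neg at h
      have hμpos : 0 < μ := lt_trans (inv_pos.mpr hS) h
      rw [hxWx] at hμle
      have hxxpos : 0 < x ⬝ᵥ x := lt_of_lt_of_le (by positivity) hCS
      have h1 : S⁻¹ * (x ⬝ᵥ x) < μ * (x ⬝ᵥ x) := mul_lt_mul_of_pos_right h hxxpos
      have h3 : S⁻¹ * S^2 ≤ S⁻¹ * (x ⬝ᵥ x) :=
        mul_le_mul_of_nonneg_left hCS (inv_pos.mpr hS).le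
      have h2 : S⁻¹ * S^2 = S := by
        field_simp
      linarith
    exact le_trans (csInf_le hbdd hμmem) hμS
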